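/- Let G be a graph with finite corner rank α. If some vertex of corner rank α is adjacent to every vertex of G_{α−1}, then every vertex of corner rank α is adjacent to every vertex of G_{α−1}. -/

import Mathlib

open Classical

/-- A finite reflexive graph: adjacency is symmetric and every vertex is
adjacent to itself (closed neighborhood `N[v] = {u | Adj v u}`). -/
structure RefGraph (V : Type*) where
  Adj : V → V → Prop
  symm : ∀ u v, Adj u v → Adj v u
  refl : ∀ v, Adj v v

namespace RefGraph

variable {V : Type*}

/-- `w` strictly corners `v` within the induced subgraph on `S`,
i.e. `N_S[v] ⊊ N_S[w]`. -/
def StrictCornersIn (G : RefGraph V) (S : Set V) (w v : V) : Prop :=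
  w ∈ S ∧ v ∈ S ∧ (∀ u ∈ S, G.Adj v u → G.Adj w u) ∧ ∃ u ∈ S, G.Adj w u ∧ ¬ G.Adj v u

/-- `v` is a strict corner of the induced subgraph on `S`. -/
def IsStrictCorner (G : RefGraph V) (S : Set V) (v : V) : Prop :=
  ∃ w, G.StrictCornersIn S w v

/-- `S` induces a clique. -/
def IsCliqueSet (G : RefGraph V) (S : Set V) : Prop :=
  ∀ u ∈ S, ∀ v ∈ S, G.Adj u v

/-- `lvl k` is the vertex set of the graph `G_{k+1}` of the corner ranking
procedure: start with all vertices and repeatedly delete all strict corners. -/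
def lvl (G : RefGraph V) : ℕ → Set V
  | 0 => Set.univ
  | k + 1 => {v ∈ G.lvl k | ¬ G.IsStrictCorner (G.lvl k) v}

/-- The corner rank of a vertex: the stage (1-indexed) at which it is a strict
corner, or at which the remaining graph is a clique; `∞` if neither ever occurs. -/
noncomputable def cr (G : RefGraph V) (v : V) : ℕ∞ :=
  sInf {n : ℕ∞ | ∃ m : ℕ, n = (m : ℕ∞) + 1 ∧ v ∈ G.lvl m ∧
    (G.IsStrictCorner (G.lvl m) v ∨ G.IsCliqueSet (G.lvl m))}

/-- The vertex set of `Gₖ`: the vertices of corner rank at least `k`. -/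
def GkSet (G : RefGraph V) (k : ℕ) : Set V := {v | (k : ℕ∞) ≤ G.cr v}

/-- The corner rank of the graph: the largest corner rank of a vertex. -/
noncomputable def crGraph (G : RefGraph V) [Fintype V] : ℕ∞ :=
  Finset.univ.sup fun v => G.cr v

/-- The projection map `fₖ` on a single vertex `u` of `Gₖ`. -/
noncomputable def fk (G : RefGraph V) (k : ℕ) (u : V) : Set V :=
  if (k : ℕ∞) < G.cr u then {u}
  else {w | w ∈ G.GkSet (k + 1) ∧ G.StrictCornersIn (G.GkSet k) w u}

/-- The projection map `Fₖ`: `F₁` is the identity and `Fₖ₊₁ = fₖ ∘ Fₖ`. -/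
noncomputable def Fk (G : RefGraph V) : ℕ → V → Set V
  | 0, v => {v}
  | 1, v => {v}
  | k + 2, v => ⋃ u ∈ G.Fk (k + 1) v, G.fk (k + 1) u

/-- `r` is `k`-cornered by `c`: for `k = 0`, `c = r`; for `k ≥ 1`, some
`r' ∈ Fₖ(r)` is cornered by `c` in the subgraph induced by `V(Gₖ) ∪ {c}`. -/
def kCornered (G : RefGraph V) : ℕ → V → V → Prop
  | 0, c, r => c = r
  | k + 1, c, r => ∃ r' ∈ G.Fk (k + 1) r,
      ∀ u, (u ∈ G.GkSet (k + 1) ∨ u = c) → G.Adj r' u → G.Adj c u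

/-- With the cop at `c`, the vertex `r` is `k`-proj-safe: `cr r ≥ k` and some
`c' ∈ Fₖ(c)` is not adjacent to `r`. -/
def ProjSafe (G : RefGraph V) (k : ℕ) (c r : V) : Prop :=
  (k : ℕ∞) ≤ G.cr r ∧ ∃ c' ∈ G.Fk k c, ¬ G.Adj c' r

/-- The cop at `c` can win within `k` cop moves against the robber at `r`,
robber to move. -/
def WinWithin (G : RefGraph V) : ℕ → V → V → Prop
  | 0, c, r => c = r
  | k + 1, c, r => c = r ∨ ∀ r₁, G.Adj r r₁ → ∃ c₁, G.Adj c c₁ ∧ G.WinWithin k c₁ r₁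

/-- The cop at `c` can guarantee catching the robber at `r` within `n` cop
moves, cop to move. -/
def CanCatch (G : RefGraph V) : ℕ → V → V → Prop
  | 0, c, r => c = r
  | n + 1, c, r => c = r ∨ ∃ c', G.Adj c c' ∧
      (c' = r ∨ ∀ r', G.Adj r r' → G.CanCatch n c' r')

/-- The cop has a winning strategy: some initial placement from which she can
guarantee capture in some bounded number of moves, whatever the robber does. -/
def CopWin (G : RefGraph V) : Prop :=
  ∃ (n : ℕ) (c₀ : V), ∀ r₀ : V, G.CanCatch n c₀ r₀

/-- The capture time: the least `n` such that the cop has an initial placement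
guaranteeing capture within `n` cop moves. -/
noncomputable def capt (G : RefGraph V) : ℕ :=
  sInf {n : ℕ | ∃ c₀ : V, ∀ r₀ : V, G.CanCatch n c₀ r₀}

/-- A graph of finite corner rank `α` is `1`-cop-win if some vertex of corner
rank `α` is adjacent to every vertex of `G_{α-1}`. -/
def OneCopWin (G : RefGraph V) (α : ℕ) : Prop :=
  ∃ x, G.cr x = (α : ℕ∞) ∧ ∀ u, ((α - 1 : ℕ) : ℕ∞) ≤ G.cr u → G.Adj x u

/-- `r`-cop-win for `r ∈ {0,1}`. -/
def RCopWin (G : RefGraph V) (r α : ℕ) : Prop :=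
  (r = 1 ∧ G.OneCopWin α) ∨ (r = 0 ∧ ¬ G.OneCopWin α)

/-- The largest finite corner rank occurring in `G` (0 if none occurs). -/
noncomputable def gammaMax (G : RefGraph V) : ℕ :=
  sSup {n : ℕ | ∃ v, G.cr v = (n : ℕ∞)}

/-- `F_∞`: equal to `F_{γ+1}` where `γ` is the largest finite corner rank, and
the identity (`F₁`) when no vertex has finite corner rank. -/
noncomputable def Finf (G : RefGraph V) : V → Set V :=
  G.Fk (G.gammaMax + 1)

/-- `e` lists the vertices as a dismantling ordering: every vertex except the
last is cornered, in the induced subgraph on it and the later vertices, by some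
later vertex. -/
def IsDismantlingOrdering (G : RefGraph V) {n : ℕ} (e : Fin n ≃ V) : Prop :=
  ∀ i : Fin n, (i : ℕ) + 1 < n →
    ∃ j : Fin n, i < j ∧ e j ≠ e i ∧
      ∀ u, (∃ m : Fin n, i ≤ m ∧ e m = u) → G.Adj (e i) u → G.Adj (e j) u

/-- `G` has a dismantling ordering. -/
def HasDismantling (G : RefGraph V) [Fintype V] : Prop :=
  ∃ e : Fin (Fintype.card V) ≃ V, G.IsDismantlingOrdering e

end RefGraph
namespace RefGraph

variable {V : Type*}

lemma lvl_subset_aux (G : RefGraph V) {k l : ℕ} (h : k ≤ l) : G.lvl l ⊆ G.lvl k := by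
  induction l with
  | zero => simpa using (Nat.le_zero.mp h) ▸ subset_rfl
  | succ n ih =>
    rcases Nat.lt_or_ge k (n+1) with h' | h'
    · have hstep : G.lvl (n+1) ⊆ G.lvl n := fun v hv => hv.1
      exact hstep.trans (ih (Nat.lt_succ_iff.mp h'))
    · have : k = n + 1 := le_antisymm h h'
      subst this; exact subset_rfl

lemma cr_le_succ' (G : RefGraph V) {v : V} {m : ℕ} (h1 : v ∈ G.lvl m)
    (h2 : G.IsStrictCorner (G.lvl m) v ∨ G.IsCliqueSet (G.lvl m)) :
    G.cr v ≤ (m : ℕ∞) + 1 :=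
  sInf_le ⟨m, rfl, h1, h2⟩

lemma one_le_cr' (G : RefGraph V) (v : V) : 1 ≤ G.cr v :=
  le_sInf fun n hn => by
    obtain ⟨m, rfl, -, -⟩ := hn
    exact le_add_self

lemma mem_lvl_of_lt_cr' (G : RefGraph V) {v : V} :
    ∀ k : ℕ, (k : ℕ∞) + 1 ≤ G.cr v → v ∈ G.lvl k
  | 0, _ => Set.mem_univ v
  | k+1, h => by
    have hk : (k : ℕ∞) + 1 ≤ G.cr v := by
      refine le_trans ?_ h
      push_cast
      exact add_le_add_left (le_add_right le_rfl) 1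
    have hmem := G.mem_lvl_of_lt_cr' k hk
    refine ⟨hmem, fun hc => ?_⟩
    have h1 := G.cr_le_succ' hmem (Or.inl hc)
    have h2 : ((k+2 : ℕ) : ℕ∞) ≤ ((k+1 : ℕ) : ℕ∞) := by
      push_cast
      calc ((k : ℕ∞) + 1) + 1 ≤ G.cr v := by push_cast at h; exact h
        _ ≤ (k : ℕ∞) + 1 := h1
    have := Nat.cast_le.mp h2
    omega

lemma le_cr_of_mem_lvl' (G : RefGraph V) {v : V} {k : ℕ} (hv : v ∈ G.lvl k)
    (hnc : ∀ m, m < k → ¬ G.IsCliqueSet (G.lvl m)) :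
    (k : ℕ∞) + 1 ≤ G.cr v := by
  refine le_sInf fun n hn => ?_
  obtain ⟨m, rfl, hm, hcc⟩ := hn
  have hkm : k ≤ m := by
    by_contra hlt
    push_neg at hlt
    rcases hcc with hc | hc
    · have hmem : v ∈ G.lvl (m+1) := G.lvl_subset_aux (Nat.succ_le_of_lt hlt) hv
      exact hmem.2 hc
    · exact hnc m hlt hc
  exact add_le_add_left (Nat.cast_le.mpr hkm) 1

end RefGraph

/-- If `G` has finite corner rank `α` and some vertex of corner
rank `α` is adjacent to every vertex of `G_{α-1}`, then every vertex of corner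
rank `α` is adjacent to every vertex of `G_{α-1}`. -/
theorem all_top_rank_vertices_dominate
    {V : Type*} [Fintype V] [Nonempty V] (G : RefGraph V) (α : ℕ)
    (hα : G.crGraph = (α : ℕ∞))
    (x : V) (hx : G.cr x = (α : ℕ∞))
    (hdom : ∀ u, ((α - 1 : ℕ) : ℕ∞) ≤ G.cr u → G.Adj x u) :
    ∀ y, G.cr y = (α : ℕ∞) → ∀ u, ((α - 1 : ℕ) : ℕ∞) ≤ G.cr u → G.Adj y u := by
    classical
  intro y hy u hu
  have hcrle : ∀ v : V, G.cr v ≤ (α : ℕ∞) := fun v =>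
    hα ▸ Finset.le_sup (Finset.mem_univ v)
  match α, hα, hx, hdom, hy, hu, hcrle with
  | 0, hα, hx, hdom, hy, hu, hcrle =>
    have := (G.one_le_cr' x).trans_eq hx
    simp at this
  | 1, hα, hx, hdom, hy, hu, hcrle =>
    obtain ⟨v, -, hvmax⟩ := Finset.exists_max_image Finset.univ
      (fun w => (Finset.univ.filter (G.Adj w)).card) ⟨x, Finset.mem_univ x⟩
    have hvnc : ¬ G.IsStrictCorner (G.lvl 0) v := by
      rintro ⟨w, -, -, hsub, t, -, hwt, hvt⟩
      have hsub' : (Finset.univ.filter (G.Adj v)) ⊆ (Finset.univ.filter (G.Adj w)) := by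
        intro a ha
        simp only [Finset.mem_filter, Finset.mem_univ, true_and] at ha ⊢
        exact hsub a (Set.mem_univ a) ha
      have hss : (Finset.univ.filter (G.Adj v)) ⊂ (Finset.univ.filter (G.Adj w)) := by
        refine (Finset.ssubset_iff_of_subset hsub').mpr ⟨t, ?_, ?_⟩
        · simp [hwt]
        · simp [hvt]
      have h1 := Finset.card_lt_card hss
      have h2 := hvmax w (Finset.mem_univ w)
      omega
    have hclique : G.IsCliqueSet (G.lvl 0) := by
      by_contra hnc
      have hv1 : v ∈ G.lvl 1 := ⟨Set.mem_univ v, hvnc⟩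
      have h2 := G.le_cr_of_mem_lvl' hv1 (fun m hm => by
        interval_cases m
        exact hnc)
      have h3 : ((2 : ℕ) : ℕ∞) ≤ ((1 : ℕ) : ℕ∞) := by
        push_cast
        calc (2 : ℕ∞) = (1 : ℕ∞) + 1 := by norm_num
          _ ≤ G.cr v := by push_cast at h2; exact h2
          _ ≤ ((1 : ℕ) : ℕ∞) := hcrle v
          _ = (1 : ℕ∞) := by push_cast; rfl
      have := Nat.cast_le.mp h3
      omega
    exact hclique y (Set.mem_univ y) u (Set.mem_univ u)
  | (β+2), hα, hx, hdom, hy, hu, hcrle =>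
    have hnc : ∀ m, m < β + 1 → ¬ G.IsCliqueSet (G.lvl m) := by
      intro m hm hc
      have hxm : x ∈ G.lvl m := by
        refine G.mem_lvl_of_lt_cr' m ?_
        rw [hx]
        exact_mod_cast (by omega : m + 1 ≤ β + 2)
      have h1 := G.cr_le_succ' hxm (Or.inr hc)
      rw [hx] at h1
      have := Nat.cast_le.mp (show ((β+2 : ℕ) : ℕ∞) ≤ ((m+1 : ℕ) : ℕ∞) by push_cast at h1 ⊢; exact h1)
      omega
    have harith : (β + 2 - 1 : ℕ) = β + 1 := rfl
    have hxd : ∀ w ∈ G.lvl β, G.Adj x w := by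
      intro w hw
      apply hdom
      have h1 := G.le_cr_of_mem_lvl' hw (fun m hm => hnc m (by omega))
      rw [harith]
      exact_mod_cast h1
    have hy1 : y ∈ G.lvl (β + 1) := by
      refine G.mem_lvl_of_lt_cr' (β+1) ?_
      rw [hy]
      push_cast
      exact le_rfl
    have hx1 : x ∈ G.lvl (β + 1) := by
      refine G.mem_lvl_of_lt_cr' (β+1) ?_
      rw [hx]
      push_cast
      exact le_rfl
    obtain ⟨hyβ, hync⟩ := hy1
    have hxβ : x ∈ G.lvl β := hx1.1
    have huβ : u ∈ G.lvl β := by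
      refine G.mem_lvl_of_lt_cr' β ?_
      rw [harith] at hu
      exact_mod_cast hu
    by_contra hyu
    exact hync ⟨x, hxβ, hyβ, fun t ht hat => hxd t ht, u, huβ, hxd u huβ, hyu⟩
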